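/- There exist a binary operation F : S¹ × S¹ → S¹ and elements z, o ∈ S¹ such that F(z,x) = z and F(o,x) = x for all x ∈ S¹, and such that the jump χ(F) is at most 2/3 (the domain S¹ × S¹ carrying the product topology). Hence μ(S¹, {F(0,x)≈0, F(1,x)≈x}) ≤ 2/3. -/

import Mathlib

open scoped ENNReal

/-- The jump of `f` at `b`: the infimum, over open neighborhoods `U` of `b`,
of the diameter (in `[0,∞]`) of `f '' U`. -/
noncomputable def jumpAt {B A : Type*} [TopologicalSpace B] [PseudoEMetricSpace A]
    (f : B → A) (b : B) : ℝ≥0∞ :=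
  ⨅ (U : Set B) (_ : IsOpen U) (_ : b ∈ U), EMetric.diam (f '' U)

/-- The jump of `f`: the supremum over all points of the jump of `f` there. -/
noncomputable def jump {B A : Type*} [TopologicalSpace B] [PseudoEMetricSpace A]
    (f : B → A) : ℝ≥0∞ :=
  ⨆ b, jumpAt f b

noncomputable section JumpCircle

instance : Fact ((0:ℝ) < 2) := ⟨by norm_num⟩

/-- sweep count -/
def Kf (t x : ℝ) : ℤ := min 3 (max 0 (⌊3*t - x/2⌋ + 1))

/-- the lift of the operation -/
def Gf (a x : ℝ) : ℝ := x * (3 - Kf |1-a| x) / 3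

/-- representative in [0,2) -/
def rep (u : AddCircle (2:ℝ)) : ℝ := (AddCircle.equivIco 2 0 u : ℝ)

/-- the operation -/
def Ff (p : AddCircle (2:ℝ) × AddCircle (2:ℝ)) : AddCircle (2:ℝ) :=
  ((Gf (rep p.1) (rep p.2) : ℝ) : AddCircle (2:ℝ))

lemma rep_mem (u : AddCircle (2:ℝ)) : rep u ∈ Set.Ico (0:ℝ) 2 := by
  have h := (AddCircle.equivIco 2 0 u).2
  simpa [rep] using h

lemma coe_rep (u : AddCircle (2:ℝ)) : ((rep u : ℝ) : AddCircle (2:ℝ)) = u := by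
  exact (AddCircle.equivIco 2 0).symm_apply_apply u

lemma rep_coe {b : ℝ} (hb : b ∈ Set.Ico (0:ℝ) 2) : rep ((b : ℝ) : AddCircle (2:ℝ)) = b := by
  unfold rep
  rw [show ((b:ℝ) : AddCircle (2:ℝ)) = (QuotientAddGroup.mk b) from rfl]
  rw [AddCircle.equivIco, QuotientAddGroup.equivIcoMod_coe]
  exact (toIcoMod_eq_self (by norm_num)).mpr (by simpa using hb)


lemma norm_le_one (v : AddCircle (2:ℝ)) : ‖v‖ ≤ 1 := by
  have := AddCircle.norm_le_half_period (p := (2:ℝ)) (x := v) (by norm_num)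
  simpa using this

lemma dist_le_one (u v : AddCircle (2:ℝ)) : dist u v ≤ 1 := by
  rw [dist_eq_norm]; exact norm_le_one _

lemma coe_two_mul (m : ℤ) : (((2*m : ℝ)) : AddCircle (2:ℝ)) = 0 := by
  rw [QuotientAddGroup.eq_zero_iff]
  refine ⟨m, ?_⟩
  simp [zsmul_eq_mul, mul_comm]

lemma dist_coe_le (r s : ℝ) (m : ℤ) :
    dist ((r : ℝ) : AddCircle (2:ℝ)) ((s : ℝ) : AddCircle (2:ℝ)) ≤ |r - s - 2*m| := by
  rw [dist_eq_norm, ← QuotientAddGroup.mk_sub]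
  have h : ((r - s : ℝ) : AddCircle (2:ℝ)) = ((r - s - 2*m : ℝ) : AddCircle (2:ℝ)) := by
    rw [← sub_eq_zero, ← QuotientAddGroup.mk_sub]
    have : (r - s) - (r - s - 2*m) = 2*m := by ring
    rw [this]
    exact coe_two_mul m
  rw [h]
  calc ‖((r - s - 2*m : ℝ) : AddCircle (2:ℝ))‖ ≤ ‖(r - s - 2*m : ℝ)‖ :=
        QuotientAddGroup.norm_mk_le_norm
    _ = |r - s - 2*m| := Real.norm_eq_abs _

lemma dist_coe_ge {x₁ x₂ : ℝ} (h₁ : x₁ ∈ Set.Ico (0:ℝ) 2) (h₂ : x₂ ∈ Set.Ico (0:ℝ) 2) :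
    min |x₁ - x₂| (2 - |x₁ - x₂|) ≤ dist ((x₁ : ℝ) : AddCircle (2:ℝ)) ((x₂ : ℝ) : AddCircle (2:ℝ)) := by
  rw [dist_eq_norm, ← QuotientAddGroup.mk_sub]
  rw [AddCircle.norm_eq]
  set n : ℤ := round (2⁻¹ * (x₁ - x₂)) with hn
  have hd : |x₁ - x₂| < 2 := by
    rw [abs_lt]; constructor <;> [linarith [h₁.1, h₂.2]; linarith [h₁.2, h₂.1]]
  rcases eq_or_ne n 0 with h0 | h0
  · rw [h0]
    simpa using min_le_left |x₁-x₂| (2-|x₁-x₂|)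
  · have h1 : (1:ℝ) ≤ |(n:ℝ)| := by
      have := Int.one_le_abs (by exact_mod_cast h0)
      exact_mod_cast this
    refine le_trans (min_le_right _ _) ?_
    have : |(n:ℝ)| * 2 - |x₁ - x₂| ≤ |x₁ - x₂ - n * 2| := by
      have := abs_sub_abs_le_abs_sub (n * (2:ℝ)) (x₁ - x₂)
      rw [abs_mul, abs_two] at this
      have habs : |n * (2:ℝ) - (x₁ - x₂)| = |x₁ - x₂ - n * 2| := abs_sub_comm _ _
      linarith [this, habs.le, habs.ge]
    linarith

lemma Kf_bounds (t x : ℝ) : 0 ≤ Kf t x ∧ Kf t x ≤ 3 := by unfold Kf; omega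

lemma gf_bounds (t : ℝ) {x : ℝ} (hx : 0 ≤ x) :
    0 ≤ x * (3 - Kf t x) / 3 ∧ x * (3 - Kf t x) / 3 ≤ x := by
  obtain ⟨h0, h3⟩ := Kf_bounds t x
  have h0' : (0:ℝ) ≤ (Kf t x : ℝ) := by exact_mod_cast h0
  have h3' : ((Kf t x : ℝ)) ≤ 3 := by exact_mod_cast h3
  constructor
  · nlinarith
  · nlinarith

lemma key_near {t₁ t₂ x₁ x₂ : ℝ} (h₁ : x₁ ∈ Set.Ico (0:ℝ) 2) (h₂ : x₂ ∈ Set.Ico (0:ℝ) 2)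
    (ht : |t₁ - t₂| ≤ 1/12) (hx : |x₁ - x₂| ≤ 1/12) :
    dist ((x₁ * (3 - Kf t₁ x₁) / 3 : ℝ) : AddCircle (2:ℝ))
      ((x₂ * (3 - Kf t₂ x₂) / 3 : ℝ) : AddCircle (2:ℝ)) ≤ 2/3 + |x₁ - x₂| := by
  obtain ⟨ht1, ht2⟩ := abs_le.mp ht
  obtain ⟨hx1, hx2⟩ := abs_le.mp hx
  have hf1 : ⌊3*t₁ - x₁/2⌋ ≤ ⌊3*t₂ - x₂/2⌋ + 1 := by
    calc ⌊3*t₁ - x₁/2⌋ ≤ ⌊(3*t₂ - x₂/2) + 1⌋ := Int.floor_le_floor (by linarith)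
      _ = ⌊3*t₂ - x₂/2⌋ + 1 := by rw [Int.floor_add_one]
  have hf2 : ⌊3*t₂ - x₂/2⌋ ≤ ⌊3*t₁ - x₁/2⌋ + 1 := by
    calc ⌊3*t₂ - x₂/2⌋ ≤ ⌊(3*t₁ - x₁/2) + 1⌋ := Int.floor_le_floor (by linarith)
      _ = ⌊3*t₁ - x₁/2⌋ + 1 := by rw [Int.floor_add_one]
  have hK : Kf t₁ x₁ - Kf t₂ x₂ ≤ 1 ∧ Kf t₂ x₂ - Kf t₁ x₁ ≤ 1 := by unfold Kf; omega
  obtain ⟨hK0₁, hK3₁⟩ := Kf_bounds t₁ x₁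
  obtain ⟨hK0₂, hK3₂⟩ := Kf_bounds t₂ x₂
  have hk0₁ : (0:ℝ) ≤ (Kf t₁ x₁ : ℝ) := by exact_mod_cast hK0₁
  have hk3₁ : ((Kf t₁ x₁ : ℝ)) ≤ 3 := by exact_mod_cast hK3₁
  have hk0₂ : (0:ℝ) ≤ (Kf t₂ x₂ : ℝ) := by exact_mod_cast hK0₂
  have hk3₂ : ((Kf t₂ x₂ : ℝ)) ≤ 3 := by exact_mod_cast hK3₂
  have hkd1 : ((Kf t₁ x₁ : ℝ)) - (Kf t₂ x₂ : ℝ) ≤ 1 := by exact_mod_cast hK.1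
  have hkd2 : ((Kf t₂ x₂ : ℝ)) - (Kf t₁ x₁ : ℝ) ≤ 1 := by exact_mod_cast hK.2
  set k₁ : ℝ := ((Kf t₁ x₁ : ℝ)) with hk₁
  set k₂ : ℝ := ((Kf t₂ x₂ : ℝ)) with hk₂
  refine le_trans (by simpa using dist_coe_le (x₁ * (3 - k₁) / 3) (x₂ * (3 - k₂) / 3) 0) ?_
  have e0 : x₁ * (3 - k₁) / 3 - x₂ * (3 - k₂) / 3
      = (x₁ - x₂) * ((3 - k₁)/3) + x₂ * ((k₂ - k₁)/3) := by ring
  have e1 : |(x₁ - x₂) * ((3 - k₁)/3)| ≤ |x₁ - x₂| := by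
    rw [abs_mul]
    have : |(3 - k₁)/3| ≤ 1 := abs_le.mpr ⟨by linarith, by linarith⟩
    exact mul_le_of_le_one_right (abs_nonneg _) this
  have e2 : |x₂ * ((k₂ - k₁)/3)| ≤ 2/3 := by
    rw [abs_mul]
    have hx2' : |x₂| ≤ 2 := abs_le.mpr ⟨by linarith [h₂.1], by linarith [h₂.2]⟩
    have hkk : |(k₂ - k₁)/3| ≤ 1/3 := abs_le.mpr ⟨by linarith, by linarith⟩
    calc |x₂| * |(k₂ - k₁)/3| ≤ 2 * (1/3) :=
          mul_le_mul hx2' hkk (abs_nonneg _) (by norm_num)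
      _ = 2/3 := by norm_num
  calc |x₁ * (3 - k₁) / 3 - x₂ * (3 - k₂) / 3|
      = |(x₁ - x₂) * ((3 - k₁)/3) + x₂ * ((k₂ - k₁)/3)| := by rw [e0]
    _ ≤ |(x₁ - x₂) * ((3 - k₁)/3)| + |x₂ * ((k₂ - k₁)/3)| := abs_add_le _ _
    _ ≤ |x₁ - x₂| + 2/3 := add_le_add e1 e2
    _ = 2/3 + |x₁ - x₂| := by ring

lemma key_wrap {t₁ t₂ x₁ x₂ : ℝ} (h₁ : x₁ ∈ Set.Ico (0:ℝ) 2) (h₂ : x₂ ∈ Set.Ico (0:ℝ) 2)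
    (hw : 23/12 ≤ x₂ - x₁) :
    dist ((x₁ * (3 - Kf t₁ x₁) / 3 : ℝ) : AddCircle (2:ℝ))
      ((x₂ * (3 - Kf t₂ x₂) / 3 : ℝ) : AddCircle (2:ℝ)) ≤ 2/3 + (2 - (x₂ - x₁)) := by
  obtain ⟨h₁0, h₁2⟩ := h₁
  obtain ⟨h₂0, h₂2⟩ := h₂
  obtain ⟨hg0, hg1⟩ := gf_bounds t₁ h₁0
  have hx₁small : x₁ ≤ 1/12 := by linarith
  have hx₂big : 23/12 ≤ x₂ := by linarith
  obtain ⟨hK0₂, hK3₂⟩ := Kf_bounds t₂ x₂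
  have hcase : Kf t₂ x₂ = 0 ∨ Kf t₂ x₂ = 1 ∨ Kf t₂ x₂ = 2 ∨ Kf t₂ x₂ = 3 := by omega
  rcases hcase with h | h | h | h <;> rw [h]
  · refine le_trans (dist_coe_le _ _ (-1)) ?_
    rw [abs_le]; push_cast
    constructor <;> nlinarith
  · refine le_trans (dist_coe_le _ _ (-1)) ?_
    rw [abs_le]; push_cast
    constructor <;> nlinarith
  · refine le_trans (dist_coe_le _ _ 0) ?_
    rw [abs_le]; push_cast
    constructor <;> nlinarith
  · refine le_trans (dist_coe_le _ _ 0) ?_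
    rw [abs_le]; push_cast
    constructor <;> nlinarith

lemma key {t₁ t₂ x₁ x₂ : ℝ} (h₁ : x₁ ∈ Set.Ico (0:ℝ) 2) (h₂ : x₂ ∈ Set.Ico (0:ℝ) 2)
    (ht : |t₁ - t₂| ≤ 1/12) (hmin : min |x₁ - x₂| (2 - |x₁ - x₂|) ≤ 1/12) :
    dist ((x₁ * (3 - Kf t₁ x₁) / 3 : ℝ) : AddCircle (2:ℝ))
      ((x₂ * (3 - Kf t₂ x₂) / 3 : ℝ) : AddCircle (2:ℝ))
      ≤ 2/3 + 2 * min |x₁ - x₂| (2 - |x₁ - x₂|) := by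
  by_cases hx : |x₁ - x₂| ≤ 1/12
  · have hminx : min |x₁ - x₂| (2 - |x₁ - x₂|) = |x₁ - x₂| :=
      min_eq_left (by linarith)
    rw [hminx]
    refine le_trans (key_near h₁ h₂ ht hx) ?_
    have := abs_nonneg (x₁ - x₂)
    linarith
  · have h2x : 2 - |x₁ - x₂| ≤ 1/12 := by
      rcases min_le_iff.mp hmin with h | h
      · exact absurd h hx
      · exact h
    have hminx : min |x₁ - x₂| (2 - |x₁ - x₂|) = 2 - |x₁ - x₂| :=
      min_eq_right (by linarith)
    rw [hminx]
    rcases abs_cases (x₁ - x₂) with ⟨habs, hsgn⟩ | ⟨habs, hsgn⟩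
    · -- |x₁ - x₂| = x₁ - x₂, so x₁ - x₂ ≥ 23/12
      rw [dist_comm]
      have hw : 23/12 ≤ x₁ - x₂ := by rw [habs] at h2x; linarith
      refine le_trans (key_wrap h₂ h₁ hw) ?_
      rw [habs]; linarith [h₁.1, h₁.2, h₂.1, h₂.2]
    · have hw : 23/12 ≤ x₂ - x₁ := by rw [habs] at h2x; linarith
      refine le_trans (key_wrap h₁ h₂ hw) ?_
      rw [habs]; linarith [h₁.1, h₁.2, h₂.1, h₂.2]

lemma tLip {a b : ℝ} (ha : a ∈ Set.Ico (0:ℝ) 2) (hb : b ∈ Set.Ico (0:ℝ) 2) :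
    |(|1-a| - |1-b|)| ≤ min |a - b| (2 - |a - b|) := by
  rw [le_min_iff]
  constructor
  · calc |(|1-a| - |1-b|)| ≤ |(1-a) - (1-b)| := abs_abs_sub_abs_le_abs_sub _ _
      _ = |a - b| := by rw [show (1-a) - (1-b) = -(a-b) by ring, abs_neg]
  · rcases abs_cases (1-a) with ⟨e1, s1⟩ | ⟨e1, s1⟩ <;>
      rcases abs_cases (1-b) with ⟨e2, s2⟩ | ⟨e2, s2⟩ <;>
      rcases abs_cases (a-b) with ⟨e3, s3⟩ | ⟨e3, s3⟩ <;>
      rcases abs_cases (|1-a| - |1-b|) with ⟨e4, s4⟩ | ⟨e4, s4⟩ <;>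
      rw [e4] <;> rw [e1, e2] at * <;> rw [e3] <;>
      linarith [ha.1, ha.2, hb.1, hb.2]

lemma Ff_dist (p q : AddCircle (2:ℝ) × AddCircle (2:ℝ)) :
    dist (Ff p) (Ff q) ≤ 2/3 + 4 * dist p q := by
  by_cases hpq : dist p q < 1/12
  · have ht : |(|1 - rep p.1| - |1 - rep q.1|)| ≤ dist p.1 q.1 := by
      refine le_trans (tLip (rep_mem p.1) (rep_mem q.1)) ?_
      have h := dist_coe_ge (rep_mem p.1) (rep_mem q.1)
      rwa [coe_rep, coe_rep] at h
    have hx : min |rep p.2 - rep q.2| (2 - |rep p.2 - rep q.2|) ≤ dist p.2 q.2 := by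
      have h := dist_coe_ge (rep_mem p.2) (rep_mem q.2)
      rwa [coe_rep, coe_rep] at h
    have hd1 : dist p.1 q.1 ≤ dist p q := by
      rw [Prod.dist_eq]; exact le_max_left _ _
    have hd2 : dist p.2 q.2 ≤ dist p q := by
      rw [Prod.dist_eq]; exact le_max_right _ _
    unfold Ff Gf
    refine le_trans (key (rep_mem p.2) (rep_mem q.2) (by linarith) (by linarith)) ?_
    linarith [dist_nonneg (x := p) (y := q)]
  · push_neg at hpq
    refine le_trans (dist_le_one _ _) ?_
    linarith

lemma Ff_zero (x : AddCircle (2:ℝ)) : Ff (0, x) = 0 := by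
  have h0 : rep (0 : AddCircle (2:ℝ)) = 0 := by
    have h : ((0:ℝ) : AddCircle (2:ℝ)) = 0 := by norm_num
    rw [← h, rep_coe ⟨le_refl (0:ℝ), by norm_num⟩]
  have hK : Kf |1 - (0:ℝ)| (rep x) = 3 := by
    unfold Kf
    have h2 : (2:ℤ) ≤ ⌊3 * |1 - (0:ℝ)| - rep x / 2⌋ := by
      apply Int.le_floor.mpr
      push_cast
      rw [show |1 - (0:ℝ)| = 1 by norm_num]
      linarith [(rep_mem x).2]
    omega
  show ((Gf (rep (0 : AddCircle (2:ℝ))) (rep x) : ℝ) : AddCircle (2:ℝ)) = 0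
  rw [h0]
  unfold Gf
  rw [hK]
  norm_num

lemma Ff_one (x : AddCircle (2:ℝ)) : Ff (((1:ℝ) : AddCircle (2:ℝ)), x) = x := by
  have h1 : rep (((1:ℝ)) : AddCircle (2:ℝ)) = 1 := rep_coe ⟨by norm_num, by norm_num⟩
  have hG : Gf 1 (rep x) = rep x := by
    rcases eq_or_lt_of_le (rep_mem x).1 with h | h
    · unfold Gf; rw [← h]; ring
    · have hK : Kf |1 - (1:ℝ)| (rep x) = 0 := by
        unfold Kf
        have hfl : ⌊3 * |1 - (1:ℝ)| - rep x / 2⌋ = -1 := by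
          apply Int.floor_eq_iff.mpr
          rw [show |1 - (1:ℝ)| = 0 by norm_num]
          push_cast
          constructor
          · linarith [(rep_mem x).2]
          · linarith
        rw [hfl]; rfl
      unfold Gf
      rw [hK]
      ring
  show ((Gf (rep (((1:ℝ)) : AddCircle (2:ℝ))) (rep x) : ℝ) : AddCircle (2:ℝ)) = x
  rw [h1, hG, coe_rep]

lemma jump_Ff_le : jump Ff ≤ 2/3 := by
  rw [jump]
  refine iSup_le fun b => ?_
  refine ENNReal.le_of_forall_pos_le_add fun ε hε _ => ?_
  set r : ℝ := (ε : ℝ) / 16 with hrdef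
  have hr : 0 < r := by positivity
  have hU : jumpAt Ff b ≤ EMetric.diam (Ff '' Metric.ball b r) := by
    rw [jumpAt]
    exact iInf_le_of_le (Metric.ball b r) (iInf_le_of_le Metric.isOpen_ball
      (iInf_le_of_le (Metric.mem_ball_self hr) le_rfl))
  refine le_trans hU ?_
  have hdiam : EMetric.diam (Ff '' Metric.ball b r) ≤ ENNReal.ofReal (2/3 + 4 * (2*r)) := by
    apply EMetric.diam_le
    rintro u ⟨p, hp, rfl⟩ v ⟨q, hq, rfl⟩
    rw [edist_dist]
    apply ENNReal.ofReal_le_ofReal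
    refine le_trans (Ff_dist p q) ?_
    have hpq : dist p q ≤ 2 * r := by
      have h1 : dist p q ≤ dist p b + dist b q := dist_triangle p b q
      have h2 : dist p b < r := Metric.mem_ball.mp hp
      have h3 : dist b q < r := by rw [dist_comm]; exact Metric.mem_ball.mp hq
      linarith
    linarith
  refine le_trans hdiam ?_
  rw [ENNReal.ofReal_add (by norm_num) (by positivity)]
  have h1 : ENNReal.ofReal (2/3 : ℝ) = 2/3 := by
    rw [ENNReal.ofReal_div_of_pos (by norm_num)]
    norm_num
  have h2 : ENNReal.ofReal (4 * (2*r)) ≤ (ε : ℝ≥0∞) := by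
    have : (4 : ℝ) * (2*r) = (ε : ℝ) / 2 := by rw [hrdef]; ring
    rw [this]
    calc ENNReal.ofReal ((ε:ℝ)/2) ≤ ENNReal.ofReal (ε:ℝ) :=
          ENNReal.ofReal_le_ofReal (by linarith [NNReal.coe_nonneg ε])
      _ = (ε : ℝ≥0∞) := ENNReal.ofReal_coe_nnreal
  rw [h1]
  exact add_le_add le_rfl h2

end JumpCircle

/-- On the circle of circumference 2 there is a binary operation with a left zero and a
left one whose jump is at most `2/3`. -/
theorem exists_zero_one_op_on_circle_jump_le :
    ∃ (F : AddCircle (2:ℝ) × AddCircle (2:ℝ) → AddCircle (2:ℝ))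
      (z o : AddCircle (2:ℝ)),
      (∀ x, F (z, x) = z) ∧ (∀ x, F (o, x) = x) ∧ jump F ≤ 2/3 := by
  exact ⟨Ff, 0, ((1:ℝ) : AddCircle (2:ℝ)), Ff_zero,
    Ff_one, jump_Ff_le⟩
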